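/- arXiv:2505.00282 — 2 statements merged into one kernel-verified Lean document; each statement's English description precedes it below -/
import Mathlib

section
/- Let M* be a random variable, A ∈ {0,1} an annotation indicator, and X, U random variables with (U, M*) ⊥ A | X and consistency M = A·M*. If P(A=1|X=x) > 0 almost surely and E|M*| < ∞, then E[M*] = E[E[M | A=1, X, U]]. -/
open MeasureTheory ProbabilityTheory

lemma aux_claim1 {Ω 𝒳 𝒱 : Type*} [MeasurableSpace Ω] [StandardBorelSpace Ω]
    [MeasurableSpace 𝒳] [MeasurableSpace 𝒱]
    (P : Measure Ω) [IsProbabilityMeasure P]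
    (A : Ω → ℝ) (X : Ω → 𝒳) (V : Ω → 𝒱)
    (hAmeas : Measurable A) (hX : Measurable X) (hV : Measurable V)
    (hbin : ∀ ω, A ω = 0 ∨ A ω = 1)
    (hMAR : CondIndepFun (MeasurableSpace.comap X inferInstance) (hX.comap_le) V A P) :
    ∀ t : Set Ω, MeasurableSet[MeasurableSpace.comap (fun ω => (X ω, V ω)) inferInstance] t →
      ∫ ω in t, A ω ∂P = ∫ ω in t, (P[A | MeasurableSpace.comap X inferInstance]) ω ∂P := by
  set s : Set Ω := A ⁻¹' {1} with hs_def
  have hs : MeasurableSet s := hAmeas (measurableSet_singleton 1)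
  have hA_ind : A = s.indicator (fun _ => (1:ℝ)) := by
    funext ω
    by_cases hω : ω ∈ s
    · rw [Set.indicator_of_mem hω]; exact hω
    · rw [Set.indicator_of_notMem hω]
      rcases hbin ω with h | h
      · exact h
      · exact absurd h hω
  have hA_int : Integrable A P := by
    rw [hA_ind]; exact (integrable_const (1:ℝ)).indicator hs
  set W : Ω → 𝒳 × 𝒱 := fun ω => (X ω, V ω) with hW_def
  have hgen : (MeasurableSpace.comap W inferInstance : MeasurableSpace Ω)
      = MeasurableSpace.generateFrom
          (Set.preimage W '' (Set.image2 (· ×ˢ ·) {B : Set 𝒳 | MeasurableSet B}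
            {C : Set 𝒱 | MeasurableSet C})) := by
    conv_lhs => rw [← generateFrom_prod]
    rw [MeasurableSpace.comap_generateFrom]
  have hpi : IsPiSystem (Set.preimage W '' (Set.image2 (· ×ˢ ·) {B : Set 𝒳 | MeasurableSet B}
      {C : Set 𝒱 | MeasurableSet C})) := by
    rintro _ ⟨r₁, ⟨B₁, hB₁, C₁, hC₁, rfl⟩, rfl⟩ _ ⟨r₂, ⟨B₂, hB₂, C₂, hC₂, rfl⟩, rfl⟩ -
    exact ⟨(B₁ ∩ B₂) ×ˢ (C₁ ∩ C₂), ⟨B₁ ∩ B₂, hB₁.inter hB₂, C₁ ∩ C₂, hC₁.inter hC₂, rfl⟩,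
      by rw [← Set.preimage_inter, Set.prod_inter_prod]⟩
  intro t ht
  refine @MeasurableSpace.induction_on_inter Ω (MeasurableSpace.comap W inferInstance)
    (fun t _ => ∫ ω in t, A ω ∂P
      = ∫ ω in t, (P[A | MeasurableSpace.comap X inferInstance]) ω ∂P) _
    hgen hpi (by simp) ?_ ?_ ?_ t ht
  · -- rectangles
    rintro _ ⟨_, ⟨B, hB, C, hC, rfl⟩, rfl⟩
    have hpre : W ⁻¹' (B ×ˢ C) = X ⁻¹' B ∩ V ⁻¹' C := Set.mk_preimage_prod X V
    rw [hpre]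
    have hXB : MeasurableSet[MeasurableSpace.comap X inferInstance] (X ⁻¹' B) := ⟨B, hB, rfl⟩
    have hVC : MeasurableSet (V ⁻¹' C) := hV hC
    have hL1 : ∫ ω in X ⁻¹' B ∩ V ⁻¹' C, A ω ∂P
        = ∫ ω in X ⁻¹' B, (Set.indicator (V ⁻¹' C ∩ s) fun _ => (1:ℝ)) ω ∂P := by
      rw [setIntegral_indicator (hVC.inter hs)]
      rw [show X ⁻¹' B ∩ (V ⁻¹' C ∩ s) = (X ⁻¹' B ∩ V ⁻¹' C) ∩ s from by
        rw [Set.inter_assoc]]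
      rw [← setIntegral_indicator hs]
      refine setIntegral_congr_fun ((hX hB).inter hVC) fun ω _ => ?_
      rw [hA_ind]
    have hindCe : (P[A | MeasurableSpace.comap X inferInstance])
          * Set.indicator (V ⁻¹' C) (fun _ => (1:ℝ))
        = Set.indicator (V ⁻¹' C) (P[A | MeasurableSpace.comap X inferInstance]) := by
      funext ω
      by_cases h1 : ω ∈ V ⁻¹' C
      · simp [Set.indicator_of_mem h1]
      · simp [Set.indicator_of_notMem h1]
    have hfact := (condIndepFun_iff (MeasurableSpace.comap X inferInstance) hX.comap_le
        V A hV hAmeas P).mp hMAR (V ⁻¹' C) s ⟨C, hC, rfl⟩ ⟨{1}, measurableSet_singleton 1, rfl⟩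
    have hse : (P⟦s|MeasurableSpace.comap X inferInstance⟧)
        = P[A | MeasurableSpace.comap X inferInstance] := by
      rw [← hA_ind]
    have hprod_int : Integrable ((P[A | MeasurableSpace.comap X inferInstance])
        * Set.indicator (V ⁻¹' C) (fun _ => (1:ℝ))) P := by
      rw [hindCe]; exact integrable_condExp.indicator hVC
    have hpull : P[(P[A | MeasurableSpace.comap X inferInstance])
          * Set.indicator (V ⁻¹' C) (fun _ => (1:ℝ)) | MeasurableSpace.comap X inferInstance]
        =ᵐ[P] (P[A | MeasurableSpace.comap X inferInstance])
          * (P⟦V ⁻¹' C|MeasurableSpace.comap X inferInstance⟧) :=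
      condExp_mul_of_stronglyMeasurable_left stronglyMeasurable_condExp hprod_int
        ((integrable_const (1:ℝ)).indicator hVC)
    calc ∫ ω in X ⁻¹' B ∩ V ⁻¹' C, A ω ∂P
        = ∫ ω in X ⁻¹' B, (Set.indicator (V ⁻¹' C ∩ s) fun _ => (1:ℝ)) ω ∂P := hL1
      _ = ∫ ω in X ⁻¹' B, (P⟦V ⁻¹' C ∩ s|MeasurableSpace.comap X inferInstance⟧) ω ∂P :=
          (setIntegral_condExp hX.comap_le
            ((integrable_const (1:ℝ)).indicator (hVC.inter hs)) hXB).symm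
      _ = ∫ ω in X ⁻¹' B, (P[(P[A | MeasurableSpace.comap X inferInstance])
            * Set.indicator (V ⁻¹' C) (fun _ => (1:ℝ))
            | MeasurableSpace.comap X inferInstance]) ω ∂P := by
          refine integral_congr_ae (ae_restrict_of_ae ?_)
          filter_upwards [hfact, hpull] with ω h1 h2
          rw [h1, hse, Pi.mul_apply, mul_comm, ← Pi.mul_apply _ _ ω, h2]
      _ = ∫ ω in X ⁻¹' B, ((P[A | MeasurableSpace.comap X inferInstance])
            * Set.indicator (V ⁻¹' C) (fun _ => (1:ℝ))) ω ∂P :=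
          setIntegral_condExp hX.comap_le hprod_int hXB
      _ = ∫ ω in X ⁻¹' B, (Set.indicator (V ⁻¹' C)
            (P[A | MeasurableSpace.comap X inferInstance])) ω ∂P := by rw [hindCe]
      _ = ∫ ω in X ⁻¹' B ∩ V ⁻¹' C, (P[A | MeasurableSpace.comap X inferInstance]) ω ∂P :=
          setIntegral_indicator hVC
  · -- complement
    intro t htm hCt
    have ht' : MeasurableSet t := (Measurable.comap_le (hX.prodMk hV)) t htm
    have h1 := integral_add_compl ht' hA_int
    have h2 := integral_add_compl ht'
      (integrable_condExp : Integrable (P[A | MeasurableSpace.comap X inferInstance]) P)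
    have h3 : ∫ ω, A ω ∂P
        = ∫ ω, (P[A | MeasurableSpace.comap X inferInstance]) ω ∂P :=
      (integral_condExp hX.comap_le).symm
    linarith
  · -- disjoint union
    intro fseq hdisj hfm hCf
    have hfm' : ∀ i, MeasurableSet (fseq i) := fun i =>
      (Measurable.comap_le (hX.prodMk hV)) _ (hfm i)
    rw [integral_iUnion hfm' hdisj hA_int.integrableOn,
      integral_iUnion hfm' hdisj
        (integrable_condExp :
          Integrable (P[A | MeasurableSpace.comap X inferInstance]) P).integrableOn]
    exact tsum_congr fun i => hCf i

/-- Under consistency `M = A·M*`, missing at random `(U, M*) ⊥ A | X`,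
and positivity `P(A=1|X) > 0` a.s., with `E|M*| < ∞`, we have
`E[M*] = E[E[M | A=1, X, U]]`, where the inner conditional expectation is the
conditional expectation of `M` given `(X, U)` under the measure conditioned on `A = 1`. -/
theorem stmt0 {Ω 𝒳 𝒰 : Type*} [MeasurableSpace Ω] [StandardBorelSpace Ω]
    [MeasurableSpace 𝒳] [MeasurableSpace 𝒰]
    (P : Measure Ω) [IsProbabilityMeasure P]
    (Mstar M A : Ω → ℝ) (X : Ω → 𝒳) (U : Ω → 𝒰)
    (hMstar : Measurable Mstar) (hAmeas : Measurable A)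
    (hX : Measurable X) (hU : Measurable U)
    (hbin : ∀ ω, A ω = 0 ∨ A ω = 1)
    (hcons : ∀ ω, M ω = A ω * Mstar ω)
    (hMAR : CondIndepFun (MeasurableSpace.comap X inferInstance) (hX.comap_le)
      (fun ω => (U ω, Mstar ω)) A P)
    (hpos : ∀ᵐ ω ∂P, 0 < (P[A | MeasurableSpace.comap X inferInstance]) ω)
    (hint : Integrable Mstar P) :
    ∫ ω, Mstar ω ∂P
      = ∫ ω, (MeasureTheory.condExp
          (MeasurableSpace.comap (fun ω' => (X ω', U ω')) inferInstance)
          (P[|{ω' | A ω' = 1}]) M) ω ∂P := by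
  -- basic setup
  have hVmeas : Measurable (fun ω => (U ω, Mstar ω)) := hU.prodMk hMstar
  have hm : (MeasurableSpace.comap (fun ω' => (X ω', U ω')) inferInstance : MeasurableSpace Ω)
      ≤ _ := (hX.prodMk hU).comap_le
  have hmX_le_m : (MeasurableSpace.comap X inferInstance : MeasurableSpace Ω)
      ≤ MeasurableSpace.comap (fun ω' => (X ω', U ω')) inferInstance := by
    have h1 : X = Prod.fst ∘ (fun ω' => (X ω', U ω')) := rfl
    rw [h1, ← MeasurableSpace.comap_comp]
    exact MeasurableSpace.comap_mono measurable_fst.comap_le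
  have hm_le_Big : (MeasurableSpace.comap (fun ω' => (X ω', U ω')) inferInstance
        : MeasurableSpace Ω)
      ≤ MeasurableSpace.comap (fun ω => (X ω, (U ω, Mstar ω))) inferInstance := by
    have h1 : (fun ω' => (X ω', U ω'))
        = (fun p : 𝒳 × 𝒰 × ℝ => (p.1, p.2.1)) ∘ (fun ω => (X ω, (U ω, Mstar ω))) := rfl
    rw [h1, ← MeasurableSpace.comap_comp]
    exact MeasurableSpace.comap_mono
      (measurable_fst.prodMk (measurable_fst.comp measurable_snd)).comap_le
  have hmBig : (MeasurableSpace.comap (fun ω => (X ω, (U ω, Mstar ω))) inferInstance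
      : MeasurableSpace Ω) ≤ _ := (hX.prodMk hVmeas).comap_le
  have hMstarBig : Measurable[MeasurableSpace.comap (fun ω => (X ω, (U ω, Mstar ω)))
      inferInstance] Mstar :=
    (measurable_snd.comp measurable_snd).comp (Measurable.of_comap_le le_rfl)
  set s : Set Ω := {ω' | A ω' = 1} with hs_def
  have hs : MeasurableSet s := hAmeas (measurableSet_singleton 1)
  have hmem_s : ∀ ω, ω ∈ s ↔ A ω = 1 := fun ω => Iff.rfl
  have hA_ind : A = s.indicator (fun _ => (1:ℝ)) := by
    funext ω
    by_cases hω : ω ∈ s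
    · rw [Set.indicator_of_mem hω]; exact hω
    · rw [Set.indicator_of_notMem hω]
      rcases hbin ω with h | h
      · exact h
      · exact absurd h hω
  have hA_int : Integrable A P := by
    rw [hA_ind]; exact (integrable_const (1:ℝ)).indicator hs
  have hM_ind : M = s.indicator Mstar := by
    funext ω
    rw [hcons ω]
    by_cases hω : ω ∈ s
    · rw [Set.indicator_of_mem hω, (hmem_s ω).mp hω, one_mul]
    · rw [Set.indicator_of_notMem hω]
      rcases hbin ω with h | h
      · rw [h, zero_mul]
      · exact absurd h hω
  have hM_int : Integrable M P := by
    rw [hM_ind]; exact hint.indicator hs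
  -- the conditional expectation of A given X
  have he_nonneg : 0 ≤ᵐ[P] P[A | MeasurableSpace.comap X inferInstance] :=
    condExp_nonneg (ae_of_all _ fun ω => by rcases hbin ω with h | h <;> simp [h])
  have he_le_one : ∀ᵐ ω ∂P, (P[A | MeasurableSpace.comap X inferInstance]) ω ≤ 1 := by
    have h1 : A ≤ᵐ[P] fun _ => (1:ℝ) :=
      ae_of_all _ fun ω => by rcases hbin ω with h | h <;> simp [h]
    have h2 := condExp_mono (m := MeasurableSpace.comap X inferInstance)
      hA_int (integrable_const (1:ℝ)) h1
    rw [condExp_const hX.comap_le (1:ℝ) (μ := P)] at h2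
    exact h2
  -- Claim 1
  have hclaim1 := aux_claim1 P A X (fun ω => (U ω, Mstar ω)) hAmeas hX hVmeas hbin hMAR
  -- Claim 1': e is also a version of E[A | mBig]
  have heBig : (P[A | MeasurableSpace.comap X inferInstance])
      =ᵐ[P] P[A | MeasurableSpace.comap (fun ω => (X ω, (U ω, Mstar ω))) inferInstance] := by
    refine ae_eq_condExp_of_forall_setIntegral_eq hmBig hA_int
      (fun t _ _ => integrable_condExp.integrableOn)
      (fun t ht _ => (hclaim1 t ht).symm)
      (StronglyMeasurable.aestronglyMeasurable
        (stronglyMeasurable_condExp.mono (hmX_le_m.trans hm_le_Big)))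
  have hclaim1' : ∀ h : Ω → ℝ,
      StronglyMeasurable[MeasurableSpace.comap (fun ω => (X ω, (U ω, Mstar ω)))
        inferInstance] h →
      Integrable h P → Integrable (h * A) P →
      ∫ ω, h ω * A ω ∂P
        = ∫ ω, h ω * (P[A | MeasurableSpace.comap X inferInstance]) ω ∂P := by
    intro h hhm hh1 hh2
    have e1 : ∫ ω, (h * A) ω ∂P
        = ∫ ω, (P[h * A | MeasurableSpace.comap (fun ω => (X ω, (U ω, Mstar ω)))
            inferInstance]) ω ∂P := (integral_condExp hmBig).symm
    have e2 : P[h * A | MeasurableSpace.comap (fun ω => (X ω, (U ω, Mstar ω))) inferInstance]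
        =ᵐ[P] h * P[A | MeasurableSpace.comap (fun ω => (X ω, (U ω, Mstar ω))) inferInstance] :=
      condExp_mul_of_stronglyMeasurable_left hhm hh2 hA_int
    calc ∫ ω, h ω * A ω ∂P
        = ∫ ω, (P[h * A | MeasurableSpace.comap (fun ω => (X ω, (U ω, Mstar ω)))
            inferInstance]) ω ∂P := e1
      _ = ∫ ω, h ω * (P[A | MeasurableSpace.comap X inferInstance]) ω ∂P := by
          refine integral_congr_ae ?_
          filter_upwards [e2, heBig] with ω h2ω heω
          rw [h2ω, Pi.mul_apply, ← heω]
  -- the key identity (star)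
  have hstar : ∀ t : Set Ω,
      MeasurableSet[MeasurableSpace.comap (fun ω' => (X ω', U ω')) inferInstance] t →
      ∫ ω in t ∩ s, (P[Mstar | MeasurableSpace.comap (fun ω' => (X ω', U ω'))
          inferInstance]) ω ∂P
        = ∫ ω in t ∩ s, Mstar ω ∂P := by
    intro t ht
    have ht' : MeasurableSet t := hm t ht
    have conv : ∀ φ : Ω → ℝ, ∫ ω in t ∩ s, φ ω ∂P = ∫ ω, t.indicator φ ω * A ω ∂P := by
      intro φ
      have key : (fun ω => t.indicator φ ω * A ω) = (t ∩ s).indicator φ := by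
        funext ω
        rw [hA_ind]
        calc t.indicator φ ω * s.indicator (fun _ => (1:ℝ)) ω
            = (t ∩ s).indicator (fun x => φ x * 1) ω := (Set.inter_indicator_mul _ _ _).symm
          _ = (t ∩ s).indicator φ ω := by simp
      rw [key, integral_indicator (ht'.inter hs)]
    have hf_meas_Big : StronglyMeasurable[MeasurableSpace.comap
        (fun ω => (X ω, (U ω, Mstar ω))) inferInstance]
        (t.indicator (P[Mstar | MeasurableSpace.comap (fun ω' => (X ω', U ω'))
          inferInstance])) :=
      (stronglyMeasurable_condExp.mono hm_le_Big).indicator (hm_le_Big t ht)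
    have hif : Integrable (t.indicator (P[Mstar | MeasurableSpace.comap
        (fun ω' => (X ω', U ω')) inferInstance])) P := integrable_condExp.indicator ht'
    have hbound : ∀ (φ : Ω → ℝ) ω, ‖t.indicator φ ω * A ω‖ ≤ ‖φ ω‖ := by
      intro φ ω
      rw [norm_mul]
      have h1 : ‖t.indicator φ ω‖ ≤ ‖φ ω‖ := norm_indicator_le_norm_self _ _
      have h2 : ‖A ω‖ ≤ 1 := by rcases hbin ω with h | h <;> simp [h]
      calc ‖t.indicator φ ω‖ * ‖A ω‖ ≤ ‖φ ω‖ * 1 :=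
            mul_le_mul h1 h2 (norm_nonneg _) (norm_nonneg _)
        _ = ‖φ ω‖ := mul_one _
    have hifA : Integrable (t.indicator (P[Mstar | MeasurableSpace.comap
        (fun ω' => (X ω', U ω')) inferInstance]) * A) P := by
      refine Integrable.mono' integrable_condExp.norm
        (hif.aestronglyMeasurable.mul hA_int.aestronglyMeasurable)
        (ae_of_all _ fun ω => hbound _ ω)
    have hig : Integrable (t.indicator Mstar) P := hint.indicator ht'
    have hg_meas_Big : StronglyMeasurable[MeasurableSpace.comap
        (fun ω => (X ω, (U ω, Mstar ω))) inferInstance] (t.indicator Mstar) :=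
      hMstarBig.stronglyMeasurable.indicator (hm_le_Big t ht)
    have higA : Integrable (t.indicator Mstar * A) P := by
      refine Integrable.mono' hint.norm
        (hig.aestronglyMeasurable.mul hA_int.aestronglyMeasurable)
        (ae_of_all _ fun ω => hbound _ ω)
    -- the multiplier
    have hφe_measm : StronglyMeasurable[MeasurableSpace.comap (fun ω' => (X ω', U ω'))
        inferInstance] (t.indicator (P[A | MeasurableSpace.comap X inferInstance])) :=
      (stronglyMeasurable_condExp.mono hmX_le_m).indicator ht
    have hφe_bound : ∀ᵐ ω ∂P,
        ‖t.indicator (P[A | MeasurableSpace.comap X inferInstance]) ω‖ ≤ 1 := by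
      filter_upwards [he_nonneg, he_le_one] with ω h0 h1
      by_cases hω : ω ∈ t
      · rw [Set.indicator_of_mem hω, Real.norm_eq_abs, abs_of_nonneg h0]
        exact h1
      · simp [Set.indicator_of_notMem hω]
    have hφe_meas : AEStronglyMeasurable
        (t.indicator (P[A | MeasurableSpace.comap X inferInstance])) P :=
      (integrable_condExp.indicator ht').aestronglyMeasurable
    have hφeM_int : Integrable
        (t.indicator (P[A | MeasurableSpace.comap X inferInstance]) * Mstar) P := by
      refine Integrable.mono' hint.norm (hφe_meas.mul hint.aestronglyMeasurable) ?_
      filter_upwards [hφe_bound] with ω h1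
      rw [Pi.mul_apply, norm_mul]
      calc ‖t.indicator (P[A | MeasurableSpace.comap X inferInstance]) ω‖ * ‖Mstar ω‖
          ≤ 1 * ‖Mstar ω‖ := mul_le_mul_of_nonneg_right h1 (norm_nonneg _)
        _ = ‖Mstar ω‖ := one_mul _
    have hpull : P[t.indicator (P[A | MeasurableSpace.comap X inferInstance]) * Mstar
          | MeasurableSpace.comap (fun ω' => (X ω', U ω')) inferInstance]
        =ᵐ[P] t.indicator (P[A | MeasurableSpace.comap X inferInstance])
          * P[Mstar | MeasurableSpace.comap (fun ω' => (X ω', U ω')) inferInstance] :=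
      condExp_mul_of_stronglyMeasurable_left hφe_measm hφeM_int hint
    have eq1 : ∀ (φ : Ω → ℝ) ω, t.indicator φ ω
          * (P[A | MeasurableSpace.comap X inferInstance]) ω
        = (t.indicator (P[A | MeasurableSpace.comap X inferInstance]) * φ) ω := by
      intro φ ω
      rw [Pi.mul_apply]
      by_cases hω : ω ∈ t
      · rw [Set.indicator_of_mem hω, Set.indicator_of_mem hω, mul_comm]
      · rw [Set.indicator_of_notMem hω, Set.indicator_of_notMem hω, zero_mul, zero_mul]
    calc ∫ ω in t ∩ s, (P[Mstar | MeasurableSpace.comap (fun ω' => (X ω', U ω'))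
            inferInstance]) ω ∂P
        = ∫ ω, t.indicator (P[Mstar | MeasurableSpace.comap (fun ω' => (X ω', U ω'))
            inferInstance]) ω * A ω ∂P := conv _
      _ = ∫ ω, t.indicator (P[Mstar | MeasurableSpace.comap (fun ω' => (X ω', U ω'))
            inferInstance]) ω * (P[A | MeasurableSpace.comap X inferInstance]) ω ∂P :=
          hclaim1' _ hf_meas_Big hif hifA
      _ = ∫ ω, (t.indicator (P[A | MeasurableSpace.comap X inferInstance])
            * P[Mstar | MeasurableSpace.comap (fun ω' => (X ω', U ω')) inferInstance]) ω ∂P :=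
          integral_congr_ae (ae_of_all _ fun ω => eq1 _ ω)
      _ = ∫ ω, (P[t.indicator (P[A | MeasurableSpace.comap X inferInstance]) * Mstar
            | MeasurableSpace.comap (fun ω' => (X ω', U ω')) inferInstance]) ω ∂P :=
          integral_congr_ae hpull.symm
      _ = ∫ ω, (t.indicator (P[A | MeasurableSpace.comap X inferInstance]) * Mstar) ω ∂P :=
          integral_condExp hm
      _ = ∫ ω, t.indicator Mstar ω * (P[A | MeasurableSpace.comap X inferInstance]) ω ∂P :=
          (integral_congr_ae (ae_of_all _ fun ω => eq1 Mstar ω)).symm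
      _ = ∫ ω, t.indicator Mstar ω * A ω ∂P := (hclaim1' _ hg_meas_Big hig higA).symm
      _ = ∫ ω in t ∩ s, Mstar ω ∂P := (conv _).symm
  -- positivity: P s ≠ 0
  have hPs_ne : P s ≠ 0 := by
    intro h0
    have hAzero : A =ᵐ[P] 0 := by
      have h1 : ∀ᵐ ω ∂P, ω ∉ s := measure_eq_zero_iff_ae_notMem.mp h0
      filter_upwards [h1] with ω hω
      rcases hbin ω with h | h
      · exact h
      · exact absurd h hω
    have h2 : P[A | MeasurableSpace.comap X inferInstance] =ᵐ[P] 0 := by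
      calc P[A | MeasurableSpace.comap X inferInstance]
          =ᵐ[P] P[(0 : Ω → ℝ) | MeasurableSpace.comap X inferInstance] :=
            condExp_congr_ae hAzero
        _ = 0 := condExp_zero
    have hcontr : ∀ᵐ ω ∂P, False := by
      filter_upwards [hpos, h2] with ω h1ω h2ω
      rw [h2ω] at h1ω
      exact lt_irrefl 0 h1ω
    have h3 := ae_iff.mp hcontr
    simp only [not_false_iff, Set.setOf_true] at h3
    exact (one_ne_zero (measure_univ (μ := P) ▸ h3 : (1 : ENNReal) = 0))
  have hPs_top : P s ≠ ⊤ := measure_ne_top P s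
  haveI hQprob : IsProbabilityMeasure (P[|s]) := cond_isProbabilityMeasure hPs_ne
  have hQ_int : ∀ {φ : Ω → ℝ}, Integrable φ P → Integrable φ (P[|s]) := by
    intro φ hφ
    exact Integrable.smul_measure hφ.integrableOn (ENNReal.inv_ne_top.2 hPs_ne)
  have hQ_set : ∀ (φ : Ω → ℝ) (t : Set Ω), MeasurableSet t →
      ∫ ω in t, φ ω ∂(P[|s]) = ((P s)⁻¹).toReal * ∫ ω in t ∩ s, φ ω ∂P := by
    intro φ t ht
    rw [ProbabilityTheory.cond, Measure.restrict_smul, integral_smul_measure,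
      Measure.restrict_restrict ht, smul_eq_mul]
  have hMQ_int : Integrable M (P[|s]) := hQ_int hM_int
  -- f is a version of the conditional expectation of M under Q
  have hfg : (P[Mstar | MeasurableSpace.comap (fun ω' => (X ω', U ω')) inferInstance])
      =ᵐ[P[|s]] ((P[|s])[M | MeasurableSpace.comap (fun ω' => (X ω', U ω'))
        inferInstance]) := by
    refine ae_eq_condExp_of_forall_setIntegral_eq hm hMQ_int
      (fun t _ _ => (hQ_int integrable_condExp).integrableOn)
      (fun t ht _ => ?_)
      stronglyMeasurable_condExp.aestronglyMeasurable
    have ht' : MeasurableSet t := hm t ht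
    rw [hQ_set _ t ht', hQ_set _ t ht']
    congr 1
    rw [hstar t ht]
    refine setIntegral_congr_fun (ht'.inter hs) fun ω hω => ?_
    rw [hM_ind, Set.indicator_of_mem hω.2]
  -- upgrade to P-a.e. using positivity
  have hfgP : (P[Mstar | MeasurableSpace.comap (fun ω' => (X ω', U ω')) inferInstance])
      =ᵐ[P] ((P[|s])[M | MeasurableSpace.comap (fun ω' => (X ω', U ω'))
        inferInstance]) := by
    set D : Set Ω := {ω | ¬ (P[Mstar | MeasurableSpace.comap (fun ω' => (X ω', U ω'))
      inferInstance]) ω = ((P[|s])[M | MeasurableSpace.comap (fun ω' => (X ω', U ω'))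
      inferInstance]) ω} with hD_def
    have hD_m : MeasurableSet[MeasurableSpace.comap (fun ω' => (X ω', U ω'))
        inferInstance] D :=
      (stronglyMeasurable_condExp.measurableSet_eq_fun stronglyMeasurable_condExp).compl
    have hD : MeasurableSet D := hm D hD_m
    have hQD : (P[|s]) D = 0 := ae_iff.mp hfg
    have hPDs : P (D ∩ s) = 0 := by
      rw [ProbabilityTheory.cond, Measure.smul_apply, Measure.restrict_apply hD,
        smul_eq_mul] at hQD
      rcases mul_eq_zero.mp hQD with h | h
      · exact absurd (ENNReal.inv_eq_zero.mp h) hPs_top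
      · exact h
    have hintA : ∫ ω in D, A ω ∂P = 0 := by
      rw [hA_ind, setIntegral_indicator hs, setIntegral_const, measureReal_def, hPDs]
      simp
    have hinte : ∫ ω in D, (P[A | MeasurableSpace.comap X inferInstance]) ω ∂P = 0 := by
      rw [← hclaim1 D (hm_le_Big D hD_m)]
      exact hintA
    have h0 : (P[A | MeasurableSpace.comap X inferInstance]) =ᵐ[P.restrict D] 0 :=
      (setIntegral_eq_zero_iff_of_nonneg_ae (ae_restrict_of_ae he_nonneg)
        integrable_condExp.integrableOn).mp hinte
    have hposD : ∀ᵐ ω ∂P.restrict D,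
        0 < (P[A | MeasurableSpace.comap X inferInstance]) ω := ae_restrict_of_ae hpos
    have hFalse : ∀ᵐ ω ∂P.restrict D, False := by
      filter_upwards [h0, hposD] with ω h1 h2
      rw [h1] at h2
      exact lt_irrefl 0 h2
    have hPD : P D = 0 := by
      have h3 := ae_iff.mp hFalse
      simp only [not_false_iff, Set.setOf_true] at h3
      rwa [Measure.restrict_apply_univ] at h3
    have h4 : ∀ᵐ ω ∂P, ω ∉ D := measure_eq_zero_iff_ae_notMem.mp hPD
    filter_upwards [h4] with ω hω
    exact not_not.mp hω
  calc ∫ ω, Mstar ω ∂P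
      = ∫ ω, (P[Mstar | MeasurableSpace.comap (fun ω' => (X ω', U ω'))
          inferInstance]) ω ∂P := (integral_condExp hm).symm
    _ = ∫ ω, ((P[|s])[M | MeasurableSpace.comap (fun ω' => (X ω', U ω'))
          inferInstance]) ω ∂P := integral_congr_ae hfgP
end

section
/- Under the setup of the MAR-S efficient influence function with constant annotation score π(X) = π ∈ (0,1], the variance of the influence function satisfies Var(φ) = Var(M̃*)·(1 + (1/π − 1)·(1 − R²(X̃))), where R²(X̃) = 1 − E[Var(M̃*|X̃)]/Var(M̃*). -/
open MeasureTheory ProbabilityTheory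


lemma memLp_two_condexp' {Ω : Type*} {m m0 : MeasurableSpace Ω} (hm : m ≤ m0)
    (P : Measure Ω) [IsFiniteMeasure P] {f : Ω → ℝ} (hf : MemLp f 2 P) :
    MemLp (P[f|m]) 2 P := by
  have heq : ((condExpL2 ℝ ℝ hm (hf.toLp f) : Lp ℝ 2 P) : Ω → ℝ) =ᵐ[P] P[f|m] := by
    refine ae_eq_condExp_of_forall_setIntegral_eq hm (hf.integrable one_le_two)
      (fun s hs _ => ((Lp.memLp _).integrable one_le_two).integrableOn)
      (fun s hs hPs => ?_) (aestronglyMeasurable_condExpL2 hm _)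
    rw [integral_condExpL2_eq hm (hf.toLp f) hs hPs.ne]
    exact setIntegral_congr_ae (hm s hs) ((hf.coeFn_toLp).mono fun x hx _ => hx)
  exact (Lp.memLp _).ae_eq heq

lemma condexp_mul_indep_aux {Ω 𝒳t : Type*} [mΩ : MeasurableSpace Ω] [StandardBorelSpace Ω]
    [MeasurableSpace 𝒳t]
    (P : Measure Ω) [IsProbabilityMeasure P]
    (Mstar A : Ω → ℝ) (Xt : Ω → 𝒳t)
    (hMstar : Measurable Mstar) (hAmeas : Measurable A) (hXt : Measurable Xt)
    (hbin : ∀ ω, A ω = 0 ∨ A ω = 1)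
    (hMAR : CondIndepFun (MeasurableSpace.comap Xt inferInstance) hXt.comap_le Mstar A P)
    (π : ℝ) (hπpos : 0 < π)
    (hπdef : (fun _ => π) =ᵐ[P] P[A | MeasurableSpace.comap Xt inferInstance])
    (F : ℝ → ℝ) (hF : Measurable F) (hFint : Integrable (fun ω => F (Mstar ω)) P) :
    P[fun ω => A ω * F (Mstar ω) | MeasurableSpace.comap Xt inferInstance]
      =ᵐ[P] fun ω => π * (P[fun ω' => F (Mstar ω') | MeasurableSpace.comap Xt inferInstance]) ω := by
  have hm : MeasurableSpace.comap Xt inferInstance ≤ mΩ := hXt.comap_le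
  set s : Set Ω := A ⁻¹' {1} with hs_def
  have hsm : MeasurableSet[mΩ] s := hAmeas (measurableSet_singleton 1)
  have hAind : A = s.indicator (fun _ => (1 : ℝ)) := by
    funext ω
    rcases hbin ω with h | h
    · have : ω ∉ s := by simp [hs_def, h]
      simp [Set.indicator_of_notMem this, h]
    · have : ω ∈ s := by simp [hs_def, h]
      simp [Set.indicator_of_mem this, h]
  -- conditional probability of s is π
  have h_ind : P⟦s | MeasurableSpace.comap Xt inferInstance⟧ =ᵐ[P] fun _ => π := by
    have : P⟦s | MeasurableSpace.comap Xt inferInstance⟧ = P[A|MeasurableSpace.comap Xt inferInstance] := by rw [hAind]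
    rw [this]; exact hπdef.symm
  -- key measure identity
  have hmeas_eq : ∀ u : Set ℝ, MeasurableSet u → ∀ B : Set Ω, MeasurableSet[MeasurableSpace.comap Xt inferInstance] B →
      P (Mstar ⁻¹' u ∩ s ∩ B) = ENNReal.ofReal π * P (Mstar ⁻¹' u ∩ B) := by
    intro u hu B hB
    have hcd := ((condIndepFun_iff_condExp_inter_preimage_eq_mul (hm' := hXt.comap_le)
      hMstar hAmeas).mp hMAR) u {1} hu (measurableSet_singleton 1)
    have hcd' : P⟦Mstar ⁻¹' u ∩ s | MeasurableSpace.comap Xt inferInstance⟧ =ᵐ[P] fun ω => (P⟦Mstar ⁻¹' u | MeasurableSpace.comap Xt inferInstance⟧) ω * π := by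
      refine hcd.trans ?_
      filter_upwards [h_ind] with ω hω
      rw [hω]
    have hIB : ∀ t : Set Ω, MeasurableSet[mΩ] t →
        ∫ ω in B, (P⟦t | MeasurableSpace.comap Xt inferInstance⟧) ω ∂P = (P (t ∩ B)).toReal := by
      intro t ht
      rw [setIntegral_condExp hm ((integrable_const (1:ℝ)).indicator ht) hB,
        setIntegral_indicator ht]
      simp [Measure.restrict_apply ht, Set.inter_comm t B, Measure.real]
    have hreal : (P ((Mstar ⁻¹' u ∩ s) ∩ B)).toReal = (P (Mstar ⁻¹' u ∩ B)).toReal * π := by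
      rw [← hIB _ ((hMstar hu).inter hsm), ← hIB _ (hMstar hu),
        setIntegral_congr_ae (hm B hB) (hcd'.mono fun ω hω _ => hω),
        integral_mul_const]
    have h1 : P (Mstar ⁻¹' u ∩ s ∩ B) ≠ ⊤ := measure_ne_top _ _
    have h2 : ENNReal.ofReal π * P (Mstar ⁻¹' u ∩ B) ≠ ⊤ :=
      ENNReal.mul_ne_top ENNReal.ofReal_ne_top (measure_ne_top _ _)
    rw [← ENNReal.toReal_eq_toReal_iff' h1 h2, hreal, ENNReal.toReal_mul,
      ENNReal.toReal_ofReal hπpos.le]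
    ring
  -- set-integral identity
  have hsi : ∀ B : Set Ω, MeasurableSet[MeasurableSpace.comap Xt inferInstance] B →
      ∫ ω in B, s.indicator (fun ω' => F (Mstar ω')) ω ∂P
        = π * ∫ ω in B, F (Mstar ω) ∂P := by
    intro B hB
    rw [setIntegral_indicator hsm]
    have hmap : (P.restrict (B ∩ s)).map Mstar
        = ENNReal.ofReal π • ((P.restrict B).map Mstar) := by
      ext u hu
      rw [Measure.map_apply hMstar hu, Measure.restrict_apply (hMstar hu),
        Measure.smul_apply, Measure.map_apply hMstar hu,
        Measure.restrict_apply (hMstar hu), smul_eq_mul]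
      rw [show Mstar ⁻¹' u ∩ (B ∩ s) = Mstar ⁻¹' u ∩ s ∩ B by
        rw [Set.inter_assoc, Set.inter_comm B s, ← Set.inter_assoc]]
      exact hmeas_eq u hu B hB
    have e1 : ∫ ω in B ∩ s, F (Mstar ω) ∂P = ∫ y, F y ∂((P.restrict (B ∩ s)).map Mstar) :=
      (integral_map hMstar.aemeasurable hF.aestronglyMeasurable).symm
    have e2 : ∫ y, F y ∂((P.restrict B).map Mstar) = ∫ ω in B, F (Mstar ω) ∂P :=
      integral_map hMstar.aemeasurable hF.aestronglyMeasurable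
    rw [e1, hmap, integral_smul_measure, ENNReal.toReal_ofReal hπpos.le, smul_eq_mul, e2]
  -- conclude
  have hAF : (fun ω => A ω * F (Mstar ω)) = s.indicator (fun ω' => F (Mstar ω')) := by
    funext ω
    rcases hbin ω with h | h
    · have : ω ∉ s := by simp [hs_def, h]
      simp [Set.indicator_of_notMem this, h]
    · have : ω ∈ s := by simp [hs_def, h]
      simp [Set.indicator_of_mem this, h]
  have hmain : (fun ω => π * (P[fun ω' => F (Mstar ω') | MeasurableSpace.comap Xt inferInstance]) ω)
      =ᵐ[P] P[s.indicator (fun ω' => F (Mstar ω')) | MeasurableSpace.comap Xt inferInstance] := by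
    refine ae_eq_condExp_of_forall_setIntegral_eq hm (hFint.indicator hsm)
      (fun B hB _ => (integrable_condExp.const_mul π).integrableOn)
      (fun B hB _ => ?_) ?_
    · rw [hsi B hB, ← setIntegral_condExp hm hFint hB, ← integral_const_mul]
    · exact StronglyMeasurable.aestronglyMeasurable (StronglyMeasurable.const_mul stronglyMeasurable_condExp π)
  rw [hAF]
  exact hmain.symm

/-- With a constant annotation score `π ∈ (0,1]`, the MAR-S influence
function satisfies `Var(φ) = Var(M̃*)·(1 + (1/π − 1)·(1 − R²(X̃)))`, where
`R²(X̃) = 1 − E[Var(M̃*|X̃)]/Var(M̃*)` is the nonparametric R-squared. -/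
theorem stmt3 {Ω 𝒳t : Type*} [MeasurableSpace Ω] [StandardBorelSpace Ω]
    [MeasurableSpace 𝒳t]
    (P : Measure Ω) [IsProbabilityMeasure P]
    (Mstar Mt A : Ω → ℝ) (Xt : Ω → 𝒳t)
    (hMstar : Measurable Mstar) (hAmeas : Measurable A) (hXt : Measurable Xt)
    (hL2 : MemLp Mstar 2 P)
    (hVarpos : 0 < variance Mstar P)
    (hbin : ∀ ω, A ω = 0 ∨ A ω = 1)
    (hcons : ∀ ω, Mt ω = A ω * Mstar ω)
    (hMAR : CondIndepFun (MeasurableSpace.comap Xt inferInstance) hXt.comap_le Mstar A P)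
    (π : ℝ) (hπpos : 0 < π) (hπle : π ≤ 1)
    -- constant annotation score: P(A=1|X̃) = π
    (hπdef : (fun _ => π) =ᵐ[P] P[A | MeasurableSpace.comap Xt inferInstance]) :
    let μt := P[Mstar | MeasurableSpace.comap Xt inferInstance]
    let θ : ℝ := ∫ ω, Mstar ω ∂P
    let φ : Ω → ℝ := fun ω => μt ω + (A ω / π) * (Mt ω - μt ω) - θ
    let R2 : ℝ := 1 - (∫ ω, (P[fun ω' => (Mstar ω' - μt ω') ^ 2 |
        MeasurableSpace.comap Xt inferInstance]) ω ∂P) / variance Mstar P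
    variance φ P = variance Mstar P * (1 + (1 / π - 1) * (1 - R2)) := by
  intro μt θ φ R2
  have hm : MeasurableSpace.comap Xt inferInstance ≤ ‹MeasurableSpace Ω› := hXt.comap_le
  have hμ2 : MemLp μt 2 P := memLp_two_condexp' hm P hL2
  have hμsm : StronglyMeasurable[MeasurableSpace.comap Xt inferInstance] μt :=
    stronglyMeasurable_condExp
  have hμmeas : Measurable μt := (stronglyMeasurable_condExp.mono hm).measurable
  have hMint : Integrable Mstar P := hL2.integrable one_le_two
  have hμint : Integrable μt P := hμ2.integrable one_le_two
  -- product of two L² functions is integrable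
  have hmul : ∀ {f g : Ω → ℝ}, MemLp f 2 P → MemLp g 2 P →
      Integrable (fun ω => f ω * g ω) P := by
    intro f g hf hg
    have h := memLp_one_iff_integrable.mp (MemLp.smul (r := 1) hg hf)
    exact h.congr (Filter.Eventually.of_forall fun ω => by simp [Pi.smul_apply', smul_eq_mul, mul_comm])
  -- multiplication by A preserves integrability
  have hAbd : ∃ C, ∀ ω, ‖A ω‖ ≤ C := ⟨1, fun ω => by rcases hbin ω with h | h <;> simp [h]⟩
  have hAint : ∀ {h : Ω → ℝ}, Integrable h P → Integrable (fun ω => A ω * h ω) P := by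
    intro h hh
    simpa using hh.bdd_mul hAmeas.aestronglyMeasurable (ae_of_all _ hAbd.choose_spec)
  have isub : ∀ {f g : Ω → ℝ}, Integrable f P → Integrable g P →
      Integrable (fun ω => f ω - g ω) P := fun hf hg => hf.sub hg
  have iadd : ∀ {f g : Ω → ℝ}, Integrable f P → Integrable g P →
      Integrable (fun ω => f ω + g ω) P := fun hf hg => hf.add hg
  -- the key conditional expectation identity
  have key : ∀ (F : ℝ → ℝ), Measurable F → Integrable (fun ω => F (Mstar ω)) P →
      P[fun ω => A ω * F (Mstar ω) | MeasurableSpace.comap Xt inferInstance]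
        =ᵐ[P] fun ω => π * (P[fun ω' => F (Mstar ω') |
          MeasurableSpace.comap Xt inferInstance]) ω :=
    fun F hF hFi => condexp_mul_indep_aux P Mstar A Xt hMstar hAmeas hXt hbin hMAR π hπpos
      hπdef F hF hFi
  -- unweighted version
  have uint : ∀ (F : ℝ → ℝ), Measurable F → Integrable (fun ω => F (Mstar ω)) P →
      ∫ ω, A ω * F (Mstar ω) ∂P = π * ∫ ω, F (Mstar ω) ∂P := by
    intro F hF hFi
    calc ∫ ω, A ω * F (Mstar ω) ∂P
        = ∫ ω, (P[fun ω' => A ω' * F (Mstar ω') |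
            MeasurableSpace.comap Xt inferInstance]) ω ∂P := (integral_condExp hm).symm
      _ = ∫ ω, π * (P[fun ω' => F (Mstar ω') |
            MeasurableSpace.comap Xt inferInstance]) ω ∂P :=
          integral_congr_ae (key F hF hFi)
      _ = π * ∫ ω, (P[fun ω' => F (Mstar ω') |
            MeasurableSpace.comap Xt inferInstance]) ω ∂P := integral_const_mul _ _
      _ = π * ∫ ω, F (Mstar ω) ∂P := by rw [integral_condExp hm]
  -- weighted version
  have wint : ∀ (k : Ω → ℝ), StronglyMeasurable[MeasurableSpace.comap Xt inferInstance] k →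
      ∀ (F : ℝ → ℝ), Measurable F → Integrable (fun ω => F (Mstar ω)) P →
      Integrable (fun ω => k ω * F (Mstar ω)) P →
      ∫ ω, k ω * (A ω * F (Mstar ω)) ∂P = π * ∫ ω, k ω * F (Mstar ω) ∂P := by
    intro k hk F hF hFi hkF
    have hAF : Integrable (fun ω => A ω * F (Mstar ω)) P := hAint hFi
    have hkAF : Integrable (k * fun ω => A ω * F (Mstar ω)) P := by
      have h1 : Integrable (fun ω => A ω * (k ω * F (Mstar ω))) P := hAint hkF
      refine h1.congr (Filter.Eventually.of_forall fun ω => ?_)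
      simp [Pi.mul_apply]; ring
    have hkFi : Integrable (k * fun ω => F (Mstar ω)) P := by
      refine hkF.congr (Filter.Eventually.of_forall fun ω => ?_); simp
    have hpull1 := condExp_mul_of_stronglyMeasurable_left (μ := P)
      (m := MeasurableSpace.comap Xt inferInstance) hk hkAF hAF
    have hpull2 := condExp_mul_of_stronglyMeasurable_left (μ := P)
      (m := MeasurableSpace.comap Xt inferInstance) hk hkFi hFi
    calc ∫ ω, k ω * (A ω * F (Mstar ω)) ∂P
        = ∫ ω, (k * fun ω' => A ω' * F (Mstar ω')) ω ∂P := by rfl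
      _ = ∫ ω, (P[(k * fun ω' => A ω' * F (Mstar ω')) |
            MeasurableSpace.comap Xt inferInstance]) ω ∂P := (integral_condExp hm).symm
      _ = ∫ ω, k ω * (P[fun ω' => A ω' * F (Mstar ω') |
            MeasurableSpace.comap Xt inferInstance]) ω ∂P := integral_congr_ae hpull1
      _ = ∫ ω, π * (k ω * (P[fun ω' => F (Mstar ω') |
            MeasurableSpace.comap Xt inferInstance]) ω) ∂P := by
          refine integral_congr_ae ?_
          filter_upwards [key F hF hFi] with ω hω
          rw [hω]; ring
      _ = π * ∫ ω, k ω * (P[fun ω' => F (Mstar ω') |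
            MeasurableSpace.comap Xt inferInstance]) ω ∂P := integral_const_mul _ _
      _ = π * ∫ ω, (P[(k * fun ω' => F (Mstar ω')) |
            MeasurableSpace.comap Xt inferInstance]) ω ∂P := by
          congr 1
          exact integral_congr_ae hpull2.symm
      _ = π * ∫ ω, (k * fun ω' => F (Mstar ω')) ω ∂P := by rw [integral_condExp hm]
      _ = π * ∫ ω, k ω * F (Mstar ω) ∂P := by rfl

  -- basic integral facts
  have hθdef : ∫ ω, Mstar ω ∂P = θ := rfl
  have hθint : ∫ ω, μt ω ∂P = θ := integral_condExp hm
  have hμMint : Integrable (fun ω => μt ω * Mstar ω) P := hmul hμ2 hL2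
  have hμμint : Integrable (fun ω => μt ω * μt ω) P := hmul hμ2 hμ2
  have hMMint : Integrable (fun ω => Mstar ω * Mstar ω) P := hmul hL2 hL2
  have hμM : ∫ ω, μt ω * Mstar ω ∂P = ∫ ω, μt ω * μt ω ∂P := by
    have hpull := condExp_mul_of_stronglyMeasurable_left (μ := P)
      (m := MeasurableSpace.comap Xt inferInstance) hμsm
      (show Integrable (μt * Mstar) P by exact hμMint) hMint
    calc ∫ ω, μt ω * Mstar ω ∂P
        = ∫ ω, (μt * Mstar) ω ∂P := rfl
      _ = ∫ ω, (P[(μt * Mstar) | MeasurableSpace.comap Xt inferInstance]) ω ∂P :=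
          (integral_condExp hm).symm
      _ = ∫ ω, (μt * P[Mstar | MeasurableSpace.comap Xt inferInstance]) ω ∂P :=
          integral_congr_ae hpull
      _ = ∫ ω, μt ω * μt ω ∂P := rfl
  have t3 : ∫ ω, A ω * Mstar ω ∂P = π * ∫ ω, Mstar ω ∂P :=
    uint (fun x => x) measurable_id hMint
  have t7 : ∫ ω, A ω * (Mstar ω * Mstar ω) ∂P = π * ∫ ω, Mstar ω * Mstar ω ∂P :=
    uint (fun x => x * x) (measurable_id.mul measurable_id) hMMint
  have t4 : ∫ ω, A ω * μt ω ∂P = π * ∫ ω, μt ω ∂P := by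
    have h := wint μt hμsm (fun _ => (1 : ℝ)) measurable_const (integrable_const 1)
      (by simpa using hμint)
    simp only [mul_one] at h
    rw [show (fun ω => A ω * μt ω) = fun ω => μt ω * A ω from funext fun ω => mul_comm _ _]
    exact h
  have t5 : ∫ ω, A ω * (μt ω * Mstar ω) ∂P = π * ∫ ω, μt ω * Mstar ω ∂P := by
    have h := wint μt hμsm (fun x => x) measurable_id hMint hμMint
    rw [show (fun ω => A ω * (μt ω * Mstar ω)) = fun ω => μt ω * (A ω * Mstar ω) from
      funext fun ω => by ring]
    exact h
  have t6 : ∫ ω, A ω * (μt ω * μt ω) ∂P = π * ∫ ω, μt ω * μt ω ∂P := by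
    have h := wint (fun ω => μt ω * μt ω) (hμsm.mul hμsm) (fun _ => (1 : ℝ))
      measurable_const (integrable_const 1) (by simpa using hμμint)
    simp only [mul_one] at h
    rw [show (fun ω => A ω * (μt ω * μt ω)) = fun ω => (μt ω * μt ω) * A ω from
      funext fun ω => by ring]
    exact h
  -- L² facts
  have hD2 : MemLp (fun ω => Mstar ω - μt ω) 2 P :=
    (hL2.sub hμ2).ae_eq (Filter.Eventually.of_forall fun ω => rfl)
  have hAD2 : MemLp (fun ω => A ω * (Mstar ω - μt ω)) 2 P := by
    refine hD2.of_le ((hAmeas.mul (hMstar.sub hμmeas)).aestronglyMeasurable)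
      (Filter.Eventually.of_forall fun ω => ?_)
    rcases hbin ω with h | h <;> simp [h]
  have hg2 : MemLp (fun ω => μt ω - θ) 2 P :=
    (hμ2.sub (memLp_const θ)).ae_eq (Filter.Eventually.of_forall fun ω => rfl)
  set gφ : Ω → ℝ := fun ω => (μt ω - θ) + (1 / π) * (A ω * (Mstar ω - μt ω)) with hgφ_def
  have hgφ2 : MemLp gφ 2 P :=
    (hg2.add ((hAD2.const_mul (1 / π)))).ae_eq (Filter.Eventually.of_forall fun ω => rfl)
  have hφeq : φ = gφ := by
    funext ω
    show μt ω + (A ω / π) * (Mt ω - μt ω) - θ = gφ ω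
    show _ = (μt ω - θ) + (1 / π) * (A ω * (Mstar ω - μt ω))
    rw [hcons ω]
    rcases hbin ω with h | h <;> rw [h] <;> ring
  -- mean of gφ
  have hADint : Integrable (fun ω => A ω * (Mstar ω - μt ω)) P := hAint (hMint.sub hμint)
  have hADzero : ∫ ω, A ω * (Mstar ω - μt ω) ∂P = 0 := by
    rw [show (fun ω => A ω * (Mstar ω - μt ω)) = fun ω => A ω * Mstar ω - A ω * μt ω from
      funext fun ω => by ring]
    rw [integral_sub (hAint hMint) (hAint hμint), t3, t4, hθdef, hθint]
    ring
  have hgmean : ∫ ω, gφ ω ∂P = 0 := by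
    rw [hgφ_def]
    rw [integral_add (hg2.integrable one_le_two) (hADint.const_mul (1 / π)),
      integral_sub hμint (integrable_const θ), integral_const, integral_const_mul,
      hADzero, hθint]
    simp
  -- second moment of gφ
  have hpt : ∀ ω, gφ ω ^ 2 = (μt ω * μt ω - 2 * θ * μt ω + θ ^ 2)
      + ((2 * (1 / π)) * (A ω * (μt ω * Mstar ω - μt ω * μt ω - θ * Mstar ω + θ * μt ω))
        + (1 / π) ^ 2 * (A ω * (Mstar ω * Mstar ω - 2 * (μt ω * Mstar ω) + μt ω * μt ω))) := by
    intro ω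
    show ((μt ω - θ) + (1 / π) * (A ω * (Mstar ω - μt ω))) ^ 2 = _
    rcases hbin ω with h | h <;> rw [h] <;> ring
  have iu1 : Integrable (fun ω => μt ω * μt ω - 2 * θ * μt ω + θ ^ 2) P := by
    exact (hμμint.sub (hμint.const_mul (2 * θ))).add (integrable_const (θ ^ 2))
  have ih1 : Integrable (fun ω => μt ω * Mstar ω - μt ω * μt ω - θ * Mstar ω + θ * μt ω) P := by
    exact ((hμMint.sub hμμint).sub (hMint.const_mul θ)).add (hμint.const_mul θ)
  have ih2 : Integrable (fun ω => Mstar ω * Mstar ω - 2 * (μt ω * Mstar ω) + μt ω * μt ω) P := by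
    exact (hMMint.sub (hμMint.const_mul 2)).add hμμint
  have iAh1 : Integrable (fun ω =>
      A ω * (μt ω * Mstar ω - μt ω * μt ω - θ * Mstar ω + θ * μt ω)) P := hAint ih1
  have iAh2 : Integrable (fun ω =>
      A ω * (Mstar ω * Mstar ω - 2 * (μt ω * Mstar ω) + μt ω * μt ω)) P := hAint ih2
  have hAh1 : ∫ ω, A ω * (μt ω * Mstar ω - μt ω * μt ω - θ * Mstar ω + θ * μt ω) ∂P = 0 := by
    rw [show (fun ω => A ω * (μt ω * Mstar ω - μt ω * μt ω - θ * Mstar ω + θ * μt ω))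
        = fun ω => (A ω * (μt ω * Mstar ω) - A ω * (μt ω * μt ω))
          - (θ * (A ω * Mstar ω) - θ * (A ω * μt ω)) from funext fun ω => by ring]
    rw [integral_sub (isub (hAint hμMint) (hAint hμμint))
        (isub ((hAint hMint).const_mul θ) ((hAint hμint).const_mul θ)),
      integral_sub (hAint hμMint) (hAint hμμint),
      integral_sub ((hAint hMint).const_mul θ) ((hAint hμint).const_mul θ),
      integral_const_mul, integral_const_mul, t5, t6, t3, t4, hμM, hθdef, hθint]
    ring
  have hAh2 : ∫ ω, A ω * (Mstar ω * Mstar ω - 2 * (μt ω * Mstar ω) + μt ω * μt ω) ∂P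
      = π * (∫ ω, Mstar ω * Mstar ω ∂P - ∫ ω, μt ω * μt ω ∂P) := by
    rw [show (fun ω => A ω * (Mstar ω * Mstar ω - 2 * (μt ω * Mstar ω) + μt ω * μt ω))
        = fun ω => (A ω * (Mstar ω * Mstar ω) - 2 * (A ω * (μt ω * Mstar ω)))
          + A ω * (μt ω * μt ω) from funext fun ω => by ring]
    rw [integral_add (isub (hAint hMMint) ((hAint hμMint).const_mul 2)) (hAint hμμint),
      integral_sub (hAint hMMint) ((hAint hμMint).const_mul 2),
      integral_const_mul, t7, t5, t6, hμM]
    ring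
  have hu : ∫ ω, (μt ω * μt ω - 2 * θ * μt ω + θ ^ 2) ∂P
      = ∫ ω, μt ω * μt ω ∂P - θ ^ 2 := by
    rw [integral_add (isub hμμint (hμint.const_mul (2 * θ))) (integrable_const (θ ^ 2)),
      integral_sub hμμint (hμint.const_mul (2 * θ)), integral_const_mul, integral_const,
      hθint]
    simp
    ring
  have hsplit2 : ∫ ω, gφ ω ^ 2 ∂P
      = (∫ ω, μt ω * μt ω ∂P - θ ^ 2)
        + ((2 * (1 / π)) * 0
          + (1 / π) ^ 2 * (π * (∫ ω, Mstar ω * Mstar ω ∂P - ∫ ω, μt ω * μt ω ∂P))) := by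
    simp only [hpt]
    rw [integral_add iu1 (iadd (iAh1.const_mul (2 * (1 / π))) (iAh2.const_mul ((1 / π) ^ 2))),
      integral_add (iAh1.const_mul (2 * (1 / π))) (iAh2.const_mul ((1 / π) ^ 2)),
      integral_const_mul, integral_const_mul, hAh1, hAh2, hu]
  -- variance of gφ
  have hVar : variance gφ P = ∫ ω, gφ ω ^ 2 ∂P - (∫ ω, gφ ω ∂P) ^ 2 := by
    have h := variance_eq_sub (μ := P) hgφ2
    simpa [Pi.pow_apply] using h
  -- conditional variance term
  have hVc : ∫ ω, (P[fun ω' => (Mstar ω' - μt ω') ^ 2 |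
      MeasurableSpace.comap Xt inferInstance]) ω ∂P = ∫ ω, (Mstar ω - μt ω) ^ 2 ∂P :=
    integral_condExp hm
  have hDval : ∫ ω, (Mstar ω - μt ω) ^ 2 ∂P
      = ∫ ω, Mstar ω * Mstar ω ∂P - ∫ ω, μt ω * μt ω ∂P := by
    rw [show (fun ω => (Mstar ω - μt ω) ^ 2)
        = fun ω => (Mstar ω * Mstar ω - 2 * (μt ω * Mstar ω)) + μt ω * μt ω from
      funext fun ω => by ring]
    rw [integral_add (isub hMMint (hμMint.const_mul 2)) hμμint,
      integral_sub hMMint (hμMint.const_mul 2), integral_const_mul, hμM]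
    ring
  have hVM : variance Mstar P = ∫ ω, Mstar ω * Mstar ω ∂P - θ ^ 2 := by
    have h := variance_eq_sub (μ := P) hL2
    have h2 : P[Mstar ^ 2] = ∫ ω, Mstar ω * Mstar ω ∂P := by
      simp [Pi.pow_apply, pow_two]
    rw [h, h2, hθdef]
  have hR2 : R2 = 1 - (∫ ω, Mstar ω * Mstar ω ∂P - ∫ ω, μt ω * μt ω ∂P)
      / variance Mstar P := by
    have h : R2 = 1 - (∫ ω, (P[fun ω' => (Mstar ω' - μt ω') ^ 2 |
        MeasurableSpace.comap Xt inferInstance]) ω ∂P) / variance Mstar P := rfl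
    rw [h, hVc, hDval]
  have hne : ∫ ω, Mstar ω * Mstar ω ∂P - θ ^ 2 ≠ 0 := by
    have h := hVarpos
    rw [hVM] at h
    exact ne_of_gt h
  rw [hφeq, hVar, hsplit2, hgmean, hR2, hVM]
  generalize ∫ ω, Mstar ω * Mstar ω ∂P = a at hne ⊢
  generalize ∫ ω, μt ω * μt ω ∂P = b
  field_simp
  ring
end
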